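/- The density u_α(y) = (σ/√y)·φ(√y·μ/σ) + ((μ − ασ²)/2)·e^{αy(ασ²/2 − μ)}·erfc(√y·(ασ² − μ)/√(2σ²)), where φ is the standard normal density, satisfies ∫₀^∞ e^{−βy} u_α(y) dy = σ²/(ασ² + √(2βσ²+μ²) − μ) for all β ≥ 0, when 0 ≤ α < 2μ/σ². -/

import Mathlib

open MeasureTheory Real Set

/-- standard normal density -/
noncomputable def stdNormal (z : ℝ) : ℝ := (1 / Real.sqrt (2 * Real.pi)) * Real.exp (-z ^ 2 / 2)

/-- complementary error function -/
noncomputable def erfc (x : ℝ) : ℝ := (2 / Real.sqrt Real.pi) * ∫ u in Set.Ioi x, Real.exp (-u ^ 2)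

/-- the resolvent density `u_α`. -/
noncomputable def uResolvent (μ σ α y : ℝ) : ℝ :=
  (σ / Real.sqrt y) * stdNormal (Real.sqrt y * μ / σ) +
    ((μ - α * σ ^ 2) / 2) * Real.exp (α * y * (α * σ ^ 2 / 2 - μ)) *
      erfc (Real.sqrt y * (α * σ ^ 2 - μ) / Real.sqrt (2 * σ ^ 2))

lemma integrable_eg : Integrable (fun u : ℝ => Real.exp (-u ^ 2)) := by
  simpa using integrable_exp_neg_mul_sq (one_pos)

lemma integral_Ioi_eg (x : ℝ) :
    ∫ u in Ioi x, Real.exp (-u ^ 2) =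
      (∫ u in Ioi (0:ℝ), Real.exp (-u ^ 2)) - ∫ u in (0:ℝ)..x, Real.exp (-u ^ 2) := by
  have h0 : ∀ a : ℝ, (∫ u in Iic a, Real.exp (-u ^ 2)) + ∫ u in Ioi a, Real.exp (-u ^ 2)
      = ∫ u : ℝ, Real.exp (-u ^ 2) := fun a =>
    intervalIntegral.integral_Iic_add_Ioi integrable_eg.integrableOn integrable_eg.integrableOn
  have h1 := h0 x
  have h2 := h0 0
  have h3 := intervalIntegral.integral_Iic_sub_Iic (μ := volume)
    (f := fun u : ℝ => Real.exp (-u ^ 2)) (a := (0:ℝ)) (b := x)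
    integrable_eg.integrableOn integrable_eg.integrableOn
  linarith

lemma integral_Ioi_eg_zero : ∫ u in Ioi (0:ℝ), Real.exp (-u ^ 2) = Real.sqrt Real.pi / 2 := by
  simpa using integral_gaussian_Ioi 1

lemma erfc_zero : erfc 0 = 1 := by
  rw [erfc, integral_Ioi_eg_zero]
  rw [div_mul_div_comm]
  rw [div_eq_one_iff_eq]
  · ring
  · positivity

lemma erfc_hasDerivAt (x : ℝ) :
    HasDerivAt erfc (-(2 / Real.sqrt Real.pi) * Real.exp (-x ^ 2)) x := by
  have h : ∀ y, erfc y = (2 / Real.sqrt Real.pi) *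
      ((∫ u in Ioi (0:ℝ), Real.exp (-u ^ 2)) - ∫ u in (0:ℝ)..y, Real.exp (-u ^ 2)) := by
    intro y; rw [erfc, integral_Ioi_eg y]
  rw [funext h]
  have hd : HasDerivAt (fun y => ∫ u in (0:ℝ)..y, Real.exp (-u ^ 2)) (Real.exp (-x ^ 2)) x := by
    refine intervalIntegral.integral_hasDerivAt_right
      integrable_eg.intervalIntegrable ?_ ?_
    · exact (Continuous.aestronglyMeasurable (by fun_prop)).stronglyMeasurableAtFilter
    · exact Continuous.continuousAt (by fun_prop)
  have := (hd.const_sub (∫ u in Ioi (0:ℝ), Real.exp (-u ^ 2))).const_mul (2 / Real.sqrt Real.pi)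
  refine this.congr_deriv ?_
  ring

lemma erfc_continuous : Continuous erfc := by
  rw [continuous_iff_continuousAt]
  exact fun x => (erfc_hasDerivAt x).continuousAt

lemma erfc_nonneg (x : ℝ) : 0 ≤ erfc x := by
  rw [erfc]
  apply mul_nonneg (by positivity)
  apply setIntegral_nonneg measurableSet_Ioi
  intro u _; positivity

lemma erfc_le_two (x : ℝ) : erfc x ≤ 2 := by
  rw [erfc]
  have h : (∫ u in Ioi x, Real.exp (-u ^ 2)) ≤ ∫ u : ℝ, Real.exp (-u ^ 2) := by
    exact setIntegral_le_integral integrable_eg (Filter.Eventually.of_forall fun u => by positivity)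
  have h2 : (∫ u : ℝ, Real.exp (-u ^ 2)) = Real.sqrt Real.pi := by
    simpa using integral_gaussian 1
  have hπ : 0 < Real.sqrt Real.pi := Real.sqrt_pos.2 Real.pi_pos
  calc (2 / Real.sqrt Real.pi) * ∫ u in Ioi x, Real.exp (-u ^ 2)
      ≤ (2 / Real.sqrt Real.pi) * Real.sqrt Real.pi := by
        apply mul_le_mul_of_nonneg_left (h.trans h2.le) (by positivity)
    _ = 2 := by field_simp

lemma erfc_ge_one (x : ℝ) (hx : x ≤ 0) : 1 ≤ erfc x := by
  rw [← erfc_zero, erfc, erfc]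
  apply mul_le_mul_of_nonneg_left _ (by positivity)
  apply setIntegral_mono_set integrable_eg.integrableOn
    (Filter.Eventually.of_forall fun u => by positivity)
  exact Filter.Eventually.of_forall (Ioi_subset_Ioi hx)

lemma sq_image_Ioi : (fun x : ℝ => x ^ 2) '' Ioi 0 = Ioi 0 := by
  ext y
  constructor
  · rintro ⟨x, hx, rfl⟩; exact pow_pos (show (0:ℝ) < x from hx) 2
  · intro hy
    exact ⟨Real.sqrt y, Real.sqrt_pos.2 hy, Real.sq_sqrt (le_of_lt hy)⟩

lemma sq_deriv : ∀ x ∈ Ioi (0:ℝ), HasDerivWithinAt (fun x : ℝ => x ^ 2) (2 * x) (Ioi 0) x := by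
  intro x _
  simpa [mul_comm] using ((hasDerivAt_pow 2 x).hasDerivWithinAt (s := Ioi 0))

lemma sq_injOn : InjOn (fun x : ℝ => x ^ 2) (Ioi 0) := by
  intro a ha b hb h
  simp only at h
  nlinarith [ha.out, hb.out]

lemma abs_deriv_smul (a : ℝ) : ∀ x ∈ Ioi (0:ℝ),
    |2 * x| • (Real.exp (-a * x ^ 2) / Real.sqrt (x ^ 2)) = 2 * Real.exp (-a * x ^ 2) := by
  intro x hx
  have hx0 : (0:ℝ) < x := hx
  rw [Real.sqrt_sq hx0.le, abs_of_pos (by linarith), smul_eq_mul]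
  field_simp

lemma integrableOn_exp_div_sqrt {a : ℝ} (ha : 0 < a) :
    IntegrableOn (fun y : ℝ => Real.exp (-a * y) / Real.sqrt y) (Ioi 0) := by
  have := (integrableOn_image_iff_integrableOn_abs_deriv_smul measurableSet_Ioi sq_deriv sq_injOn
    (fun y : ℝ => Real.exp (-a * y) / Real.sqrt y))
  rw [sq_image_Ioi] at this
  rw [this]
  apply IntegrableOn.congr_fun _ (fun x hx => (abs_deriv_smul a x hx).symm) measurableSet_Ioi
  exact ((integrable_exp_neg_mul_sq ha).const_mul 2).integrableOn

lemma integral_exp_div_sqrt {a : ℝ} (ha : 0 < a) :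
    ∫ y in Ioi (0:ℝ), Real.exp (-a * y) / Real.sqrt y = Real.sqrt (Real.pi / a) := by
  have h := integral_image_eq_integral_abs_deriv_smul measurableSet_Ioi sq_deriv sq_injOn
    (fun y : ℝ => Real.exp (-a * y) / Real.sqrt y)
  rw [sq_image_Ioi] at h
  rw [h, setIntegral_congr_fun measurableSet_Ioi (abs_deriv_smul a),
    MeasureTheory.integral_const_mul, integral_gaussian_Ioi]
  ring

lemma F_hasDerivAt (c s K : ℝ) (hs : s ≠ 0) (y : ℝ) (hy : 0 < y) :
    HasDerivAt (fun y => -(K / s) * (Real.exp (-s * y) * erfc (c * Real.sqrt y)))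
      (K * (Real.exp (-s * y) * erfc (c * Real.sqrt y)) +
        K * c / (s * Real.sqrt Real.pi) * (Real.exp (-(s + c ^ 2) * y) / Real.sqrt y)) y := by
  have hsq : HasDerivAt (fun y : ℝ => c * Real.sqrt y) (c * (1 / (2 * Real.sqrt y))) y :=
    (Real.hasDerivAt_sqrt hy.ne').const_mul c
  have herfc := (erfc_hasDerivAt (c * Real.sqrt y)).comp y hsq
  have hexp : HasDerivAt (fun y : ℝ => Real.exp (-s * y)) (-s * Real.exp (-s * y)) y := by
    simpa [mul_comm] using ((hasDerivAt_id y).const_mul (-s)).exp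
  have hmul := (hexp.mul herfc).const_mul (-(K / s))
  refine hmul.congr_deriv ?_
  simp only [Function.comp_apply]
  have h1 : (c * Real.sqrt y) ^ 2 = c ^ 2 * y := by
    rw [mul_pow, Real.sq_sqrt hy.le]
  have h2 : Real.exp (-(s + c ^ 2) * y) = Real.exp (-s * y) * Real.exp (-(c * Real.sqrt y) ^ 2) := by
    rw [← Real.exp_add, h1]; ring_nf
  have hsy : Real.sqrt y ≠ 0 := (Real.sqrt_pos.2 hy).ne'
  have hπ : Real.sqrt Real.pi ≠ 0 := (Real.sqrt_pos.2 Real.pi_pos).ne'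
  rw [h2]
  field_simp
  ring

lemma integrableOn_E (c : ℝ) {s : ℝ} (hs : 0 < s) :
    IntegrableOn (fun y => Real.exp (-s * y) * erfc (c * Real.sqrt y)) (Ioi 0) := by
  apply Integrable.mono' (((exp_neg_integrableOn_Ioi 0 hs)).const_mul 2)
  · exact (Continuous.aestronglyMeasurable (by
      exact (Real.continuous_exp.comp (continuous_const.mul continuous_id)).mul
        (erfc_continuous.comp (continuous_const.mul Real.continuous_sqrt)))).restrict
  · refine Filter.Eventually.of_forall fun y => ?_
    have h1 := erfc_nonneg (c * Real.sqrt y)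
    have h2 := erfc_le_two (c * Real.sqrt y)
    rw [Real.norm_eq_abs, abs_of_nonneg (by positivity)]
    have : Real.exp (-s * y) * erfc (c * Real.sqrt y) ≤ Real.exp (-s * y) * 2 :=
      mul_le_mul_of_nonneg_left h2 (Real.exp_pos _).le
    linarith [this]

lemma integrableOn_Fderiv (c : ℝ) {s : ℝ} (K : ℝ) (hs : 0 < s) :
    IntegrableOn (fun y =>
      K * (Real.exp (-s * y) * erfc (c * Real.sqrt y)) +
        K * c / (s * Real.sqrt Real.pi) * (Real.exp (-(s + c ^ 2) * y) / Real.sqrt y)) (Ioi 0) := by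
  exact (((integrableOn_E c hs).const_mul K)).add
    (((integrableOn_exp_div_sqrt (by positivity)).const_mul _))

lemma integral_Fderiv (c : ℝ) {s : ℝ} (K : ℝ) (hs : 0 < s) :
    ∫ y in Ioi (0:ℝ),
      (K * (Real.exp (-s * y) * erfc (c * Real.sqrt y)) +
        K * c / (s * Real.sqrt Real.pi) * (Real.exp (-(s + c ^ 2) * y) / Real.sqrt y)) = K / s := by
  have hcont : ContinuousWithinAt
      (fun y => -(K / s) * (Real.exp (-s * y) * erfc (c * Real.sqrt y))) (Ici 0) 0 := by
    apply Continuous.continuousWithinAt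
    exact continuous_const.mul ((Real.continuous_exp.comp (continuous_const.mul continuous_id)).mul
      (erfc_continuous.comp (continuous_const.mul Real.continuous_sqrt)))
  have htend : Filter.Tendsto (fun y => -(K / s) * (Real.exp (-s * y) * erfc (c * Real.sqrt y)))
      Filter.atTop (nhds 0) := by
    apply squeeze_zero_norm (a := fun y : ℝ => |K / s| * 2 * Real.exp (-s * y)) ?_ ?_
    · intro y
      rw [norm_mul, norm_mul, norm_neg, Real.norm_eq_abs, Real.norm_eq_abs, Real.norm_eq_abs,
        abs_of_nonneg (Real.exp_pos _).le, abs_of_nonneg (erfc_nonneg _)]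
      have := erfc_le_two (c * Real.sqrt y)
      have h3 : 0 ≤ |K / s| * Real.exp (-s * y) * (2 - erfc (c * Real.sqrt y)) :=
        mul_nonneg (mul_nonneg (abs_nonneg _) (Real.exp_pos _).le) (by linarith)
      nlinarith [h3]
    · rw [show (0:ℝ) = |K / s| * 2 * 0 by ring]
      apply Filter.Tendsto.const_mul
      apply Real.tendsto_exp_atBot.comp
      apply Filter.Tendsto.const_mul_atTop_of_neg (by linarith : (-s) < 0) Filter.tendsto_id
  have := integral_Ioi_of_hasDerivAt_of_tendsto hcont
    (fun y hy => F_hasDerivAt c s K hs.ne' y hy) (integrableOn_Fderiv c K hs) htend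
  rw [this]; simp [erfc_zero]

set_option maxHeartbeats 1000000 in
theorem laplace_of_resolvent_density
    (μ σ α : ℝ) (hμ : 0 < μ) (hσ : 0 < σ) (hα : 0 ≤ α) (hα2 : α < 2 * μ / σ ^ 2) :
    ∀ β : ℝ, 0 ≤ β →
      ∫ y in Set.Ioi (0 : ℝ), Real.exp (-β * y) * uResolvent μ σ α y
        = σ ^ 2 / (α * σ ^ 2 + Real.sqrt (2 * β * σ ^ 2 + μ ^ 2) - μ) := by
  intro β hβ
  have hσ2 : (0:ℝ) < σ ^ 2 := by positivity
  have hασ : α * σ ^ 2 < 2 * μ := by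
    have := (lt_div_iff₀ hσ2).1 hα2
    linarith
  by_cases hs : 0 < β + α * μ - α ^ 2 * σ ^ 2 / 2
  · -- main case
    set s : ℝ := β + α * μ - α ^ 2 * σ ^ 2 / 2 with hs_def
    set c : ℝ := (α * σ ^ 2 - μ) / Real.sqrt (2 * σ ^ 2) with hc_def
    set K : ℝ := (μ - α * σ ^ 2) / 2 with hK_def
    have h2σ : Real.sqrt (2 * σ ^ 2) = σ * Real.sqrt 2 := by
      rw [show (2:ℝ) * σ ^ 2 = σ ^ 2 * 2 by ring, Real.sqrt_mul (sq_nonneg σ), Real.sqrt_sq hσ.le]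
    have hc2 : c ^ 2 = (α * σ ^ 2 - μ) ^ 2 / (2 * σ ^ 2) := by
      rw [hc_def, div_pow, Real.sq_sqrt (by positivity)]
    have htval : s + c ^ 2 = β + μ ^ 2 / (2 * σ ^ 2) := by
      rw [hc2, hs_def]; field_simp; ring
    have ht_pos : 0 < s + c ^ 2 := by rw [htval]; positivity
    set C1 : ℝ := σ / Real.sqrt (2 * Real.pi) - K * c / (s * Real.sqrt Real.pi) with hC1_def
    have ptwise : ∀ y ∈ Ioi (0:ℝ), Real.exp (-β * y) * uResolvent μ σ α y
        = (K * (Real.exp (-s * y) * erfc (c * Real.sqrt y)) +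
           K * c / (s * Real.sqrt Real.pi) * (Real.exp (-(s + c ^ 2) * y) / Real.sqrt y)) +
          C1 * (Real.exp (-(s + c ^ 2) * y) / Real.sqrt y) := by
      intro y hy
      have hy' : (0:ℝ) < y := hy
      have hsqy : Real.sqrt y ^ 2 = y := Real.sq_sqrt hy'.le
      have harg : Real.sqrt y * (α * σ ^ 2 - μ) / Real.sqrt (2 * σ ^ 2) = c * Real.sqrt y := by
        rw [hc_def]; ring
      have e1 : Real.exp (-β * y) * Real.exp (α * y * (α * σ ^ 2 / 2 - μ)) = Real.exp (-s * y) := by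
        rw [← Real.exp_add]; congr 1; rw [hs_def]; ring
      have e2 : Real.exp (-β * y) * Real.exp (-(Real.sqrt y * μ / σ) ^ 2 / 2)
          = Real.exp (-(s + c ^ 2) * y) := by
        rw [← Real.exp_add]; congr 1
        rw [htval, div_pow, mul_pow, hsqy]
        field_simp
        ring
      simp only [uResolvent, stdNormal, harg]
      have t1 : Real.exp (-β * y) * ((σ / Real.sqrt y) *
          ((1 / Real.sqrt (2 * Real.pi)) * Real.exp (-(Real.sqrt y * μ / σ) ^ 2 / 2)))
          = (σ / Real.sqrt (2 * Real.pi)) * (Real.exp (-(s + c ^ 2) * y) / Real.sqrt y) := by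
        rw [← e2]; ring
      have t2 : Real.exp (-β * y) * (K * Real.exp (α * y * (α * σ ^ 2 / 2 - μ)) *
          erfc (c * Real.sqrt y)) = K * (Real.exp (-s * y) * erfc (c * Real.sqrt y)) := by
        rw [← e1]; ring
      rw [mul_add, t1, t2, hC1_def]; ring
    rw [setIntegral_congr_fun measurableSet_Ioi ptwise]
    rw [MeasureTheory.integral_add (integrableOn_Fderiv c K hs)
      ((integrableOn_exp_div_sqrt ht_pos).const_mul C1)]
    rw [integral_Fderiv c K hs, MeasureTheory.integral_const_mul, integral_exp_div_sqrt ht_pos]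
    -- algebra
    set Δ : ℝ := Real.sqrt (2 * β * σ ^ 2 + μ ^ 2) with hΔ_def
    have hΔ2 : Δ ^ 2 = 2 * β * σ ^ 2 + μ ^ 2 := Real.sq_sqrt (by positivity)
    have hΔpos : 0 < Δ := Real.sqrt_pos.2 (by positivity)
    have hΔge : μ ≤ Δ :=
      calc μ = Real.sqrt (μ ^ 2) := (Real.sqrt_sq hμ.le).symm
        _ ≤ Δ := Real.sqrt_le_sqrt (by nlinarith)
    have hsqrtpit : Real.sqrt (Real.pi / (s + c ^ 2)) = σ * Real.sqrt (2 * Real.pi) / Δ := by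
      have hne : (0:ℝ) < β + μ ^ 2 / (2 * σ ^ 2) := by positivity
      have hq : Real.pi / (s + c ^ 2) = (σ * Real.sqrt (2 * Real.pi) / Δ) ^ 2 := by
        rw [htval, div_pow, mul_pow, Real.sq_sqrt (by positivity : (0:ℝ) ≤ 2 * Real.pi), hΔ2]
        field_simp
      rw [hq, Real.sqrt_sq (by positivity)]
    have h2π : Real.sqrt (2 * Real.pi) = Real.sqrt 2 * Real.sqrt Real.pi :=
      Real.sqrt_mul (by norm_num) Real.pi
    have hq2 : (0:ℝ) < Real.sqrt 2 := Real.sqrt_pos.2 (by norm_num)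
    have hp2 : (0:ℝ) < Real.sqrt Real.pi := Real.sqrt_pos.2 Real.pi_pos
    have key : (α * σ ^ 2 + Δ - μ) * (Δ + μ - α * σ ^ 2) = 2 * σ ^ 2 * s := by
      rw [hs_def]; linear_combination hΔ2
    clear_value s c K C1 Δ
    have hE : 0 < Δ + μ - α * σ ^ 2 := by nlinarith
    have hD : 0 < α * σ ^ 2 + Δ - μ := by nlinarith [mul_pos hσ2 hs]
    rw [hsqrtpit, hC1_def, hc_def, h2σ, h2π, hK_def]
    rw [eq_div_iff hD.ne']
    clear ptwise hsqrtpit hC1_def hc_def hc2 htval ht_pos hΔ_def h2σ h2π hs_def hK_def hα2 hΔ2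
    field_simp
    linear_combination (μ - α * σ ^ 2) * key
  · -- degenerate case : α = 0 and β = 0
    have hq : 0 < μ - α * σ ^ 2 / 2 := by nlinarith
    have h1 : 0 ≤ α * μ - α ^ 2 * σ ^ 2 / 2 := by nlinarith [mul_nonneg hα hq.le]
    push_neg at hs
    have hβ0 : β = 0 := le_antisymm (by linarith) hβ
    have hα0 : α = 0 := by
      have hz : α * (μ - α * σ ^ 2 / 2) = 0 := by nlinarith [mul_nonneg hα hq.le]
      rcases mul_eq_zero.1 hz with h | h
      · exact h
      · linarith
    subst hβ0; subst hα0
    have hrhs : Real.sqrt (2 * 0 * σ ^ 2 + μ ^ 2) = μ := by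
      rw [show 2 * 0 * σ ^ 2 + μ ^ 2 = μ ^ 2 by ring, Real.sqrt_sq hμ.le]
    rw [hrhs, show (0:ℝ) * σ ^ 2 + μ - μ = 0 by ring, div_zero]
    apply integral_undef
    intro hI
    have hconst : Integrable (fun _ : ℝ => μ / 2) (volume.restrict (Ioi 0)) := by
      apply Integrable.mono' hI aestronglyMeasurable_const
      rw [ae_restrict_iff' measurableSet_Ioi]
      filter_upwards with y hy
      have hy' : (0:ℝ) < y := hy
      have hfirst : 0 ≤ (σ / Real.sqrt y) * stdNormal (Real.sqrt y * μ / σ) := by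
        apply mul_nonneg (div_nonneg hσ.le (Real.sqrt_nonneg y))
        rw [stdNormal]
        positivity
      have harg : Real.sqrt y * (0 * σ ^ 2 - μ) / Real.sqrt (2 * σ ^ 2) ≤ 0 := by
        apply div_nonpos_of_nonpos_of_nonneg _ (Real.sqrt_nonneg _)
        have := Real.sqrt_nonneg y
        nlinarith
      have herfc := erfc_ge_one _ harg
      rw [Real.norm_eq_abs, abs_of_nonneg (by positivity)]
      simp only [uResolvent]
      have hexp1 : Real.exp (-(0:ℝ) * y) = 1 := by norm_num
      have hexp2 : Real.exp ((0:ℝ) * y * (0 * σ ^ 2 / 2 - μ)) = 1 := by norm_num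
      rw [hexp1, hexp2, one_mul]
      nlinarith [hfirst, herfc]
    have := integrable_const_iff.mp hconst
    rcases this with h | h
    · linarith
    · rw [isFiniteMeasure_restrict, Real.volume_Ioi] at h
      exact absurd h (by simp)
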